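/- Let Δ ≥ 3 and let V be the 2^{Δ-1} × 2^{Δ-1} real symmetric matrix with V_{x,y} = -1 if binary strings x, y differ in all Δ-1 positions, V_{x,y} = 1 if they differ in exactly one position, and 0 otherwise. Then for every vector α ∈ ℂ^{2^{Δ-1}}, α† V α ≤ (Δ-2)·‖α‖². -/

import Mathlib

namespace Vaux

open Finset

/-- Character: `(-1)^{|S ∩ z|}` restricted to the low `n` bits, as a product. -/
def chi (n S z : ℕ) : ℝ :=
  ∏ k ∈ Finset.range n, (if S.testBit k && z.testBit k then (-1 : ℝ) else 1)

/-- Sign `(-1)^{|S|}` on the low `n` bits. -/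
def eps (n S : ℕ) : ℝ :=
  ∏ k ∈ Finset.range n, (if S.testBit k then (-1 : ℝ) else 1)

/-- Sign `(-1)^{S_k}`. -/
def eta (S k : ℕ) : ℝ := if S.testBit k then -1 else 1

/-- Eigenvalue `(n - 2|S|) - (-1)^{|S|}`. -/
def lam (n S : ℕ) : ℝ := (∑ k ∈ Finset.range n, eta S k) - eps n S

lemma chi_mul (n S x y : ℕ) : chi n S x * chi n S y = chi n S (x ^^^ y) := by
  unfold chi
  rw [← Finset.prod_mul_distrib]
  refine Finset.prod_congr rfl fun k _ => ?_
  rw [Nat.testBit_xor]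
  cases S.testBit k <;> cases x.testBit k <;> cases y.testBit k <;> norm_num

lemma chi_flip (n S z i : ℕ) (hi : i < n) :
    chi n (S ^^^ 2 ^ i) z = (if z.testBit i then -1 else 1) * chi n S z := by
  unfold chi
  rw [Finset.prod_eq_mul_prod_sdiff_singleton_of_mem (Finset.mem_range.2 hi),
      Finset.prod_eq_mul_prod_sdiff_singleton_of_mem (Finset.mem_range.2 hi)
        (fun k => if S.testBit k && z.testBit k then (-1 : ℝ) else 1)]
  have h1 : ∀ k ∈ Finset.range n \ {i},
      (if (S ^^^ 2 ^ i).testBit k && z.testBit k then (-1 : ℝ) else 1)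
        = (if S.testBit k && z.testBit k then (-1 : ℝ) else 1) := by
    intro k hk
    have hki : ¬ (i = k) := by
      intro h; subst h; simp at hk
    rw [Nat.testBit_xor, Nat.testBit_two_pow]
    simp [hki]
  rw [Finset.prod_congr rfl h1]
  have h2 : (S ^^^ 2 ^ i).testBit i = !S.testBit i := by
    rw [Nat.testBit_xor, Nat.testBit_two_pow]; simp
  rw [h2]
  cases S.testBit i <;> cases z.testBit i <;> simp <;> ring

lemma eps_flip (n S i : ℕ) (hi : i < n) : eps n (S ^^^ 2 ^ i) = - eps n S := by
  unfold eps
  rw [Finset.prod_eq_mul_prod_sdiff_singleton_of_mem (Finset.mem_range.2 hi),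
      Finset.prod_eq_mul_prod_sdiff_singleton_of_mem (Finset.mem_range.2 hi)
        (fun k => if S.testBit k then (-1 : ℝ) else 1)]
  have h1 : ∀ k ∈ Finset.range n \ {i},
      (if (S ^^^ 2 ^ i).testBit k then (-1 : ℝ) else 1)
        = (if S.testBit k then (-1 : ℝ) else 1) := by
    intro k hk
    have hki : ¬ (i = k) := by
      intro h; subst h; simp at hk
    rw [Nat.testBit_xor, Nat.testBit_two_pow]
    simp [hki]
  rw [Finset.prod_congr rfl h1]
  have h2 : (S ^^^ 2 ^ i).testBit i = !S.testBit i := by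
    rw [Nat.testBit_xor, Nat.testBit_two_pow]; simp
  rw [h2]
  cases S.testBit i <;> simp <;> ring

lemma eta_flip_self (S i : ℕ) : eta (S ^^^ 2 ^ i) i = - eta S i := by
  unfold eta
  have h2 : (S ^^^ 2 ^ i).testBit i = !S.testBit i := by
    rw [Nat.testBit_xor, Nat.testBit_two_pow]; simp
  rw [h2]
  cases S.testBit i <;> simp

lemma eta_flip_ne (S i k : ℕ) (h : i ≠ k) : eta (S ^^^ 2 ^ i) k = eta S k := by
  unfold eta
  rw [Nat.testBit_xor, Nat.testBit_two_pow]
  simp [h]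

/-- Involution trick: flipping bit `i` negates `f` pointwise, so the sum is `0`. -/
lemma sum_flip_zero (n i : ℕ) (hi : i < n) (f : ℕ → ℝ)
    (hf : ∀ S, f (S ^^^ 2 ^ i) = - f S) :
    ∑ S : Fin (2 ^ n), f S.val = 0 := by
  have hlt : (2 : ℕ) ^ i < 2 ^ n := Nat.pow_lt_pow_right one_lt_two hi
  refine Finset.sum_involution
    (fun a _ => ⟨a.val ^^^ 2 ^ i, Nat.xor_lt_two_pow a.isLt hlt⟩) ?_ ?_
    (fun a _ => Finset.mem_univ _) ?_
  · intro a _; simp only [hf]; ring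
  · intro a _ _ h
    have hval : a.val ^^^ 2 ^ i = a.val := congrArg Fin.val h
    have h2 : (2 : ℕ) ^ i = 0 := by
      calc (2 : ℕ) ^ i = a.val ^^^ (a.val ^^^ 2 ^ i) := by
            rw [← Nat.xor_assoc, Nat.xor_self, Nat.zero_xor]
        _ = a.val ^^^ a.val := by rw [hval]
        _ = 0 := Nat.xor_self _
    exact absurd h2 (Nat.two_pow_pos i).ne'
  · intro a _
    apply Fin.ext
    simp only
    rw [Nat.xor_assoc, Nat.xor_self, Nat.xor_zero]

lemma testBit_eq_false_of_ge {z n j : ℕ} (hz : z < 2 ^ n) (hj : n ≤ j) :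
    z.testBit j = false :=
  Nat.testBit_lt_two_pow (lt_of_lt_of_le hz (Nat.pow_le_pow_right (by norm_num) hj))

lemma sum_chi_eq (n z : ℕ) (hz : z < 2 ^ n) :
    ∑ S : Fin (2 ^ n), chi n S.val z = if z = 0 then (2 ^ n : ℝ) else 0 := by
  split_ifs with h
  · subst h
    have h1 : ∀ S : Fin (2 ^ n), chi n S.val 0 = 1 := by
      intro S; unfold chi
      apply Finset.prod_eq_one
      intro k _; simp [Nat.zero_testBit]
    rw [Finset.sum_congr rfl fun S _ => h1 S]
    simp
  · have hex : ∃ i, z.testBit i = true := by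
      by_contra hc
      push_neg at hc
      exact h (Nat.eq_of_testBit_eq fun j => by
        simp [Nat.zero_testBit, Bool.eq_false_iff.2 (hc j)])
    obtain ⟨i, hib⟩ := hex
    have hi : i < n := by
      by_contra hin
      rw [testBit_eq_false_of_ge hz (le_of_not_gt hin)] at hib
      exact Bool.false_ne_true hib
    exact sum_flip_zero n i hi (fun S => chi n S z) fun S => by
      rw [chi_flip n S z i hi, hib]; norm_num

lemma sum_eps_chi (n z : ℕ) (hz : z < 2 ^ n) :
    ∑ S : Fin (2 ^ n), eps n S.val * chi n S.val z
      = if z = 2 ^ n - 1 then (2 ^ n : ℝ) else 0 := by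
  split_ifs with h
  · subst h
    have h1 : ∀ S : Fin (2 ^ n), eps n S.val * chi n S.val (2 ^ n - 1) = 1 := by
      intro S; unfold eps chi
      rw [← Finset.prod_mul_distrib]
      apply Finset.prod_eq_one
      intro k hk
      have hb : (2 ^ n - 1).testBit k = true := by
        rw [Nat.testBit_two_pow_sub_one]
        simpa using Finset.mem_range.1 hk
      rw [hb]
      cases S.val.testBit k <;> norm_num
    rw [Finset.sum_congr rfl fun S _ => h1 S]
    simp
  · have hex : ∃ i < n, z.testBit i = false := by
      by_contra hc
      push_neg at hc
      refine h (Nat.eq_of_testBit_eq fun j => ?_)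
      rw [Nat.testBit_two_pow_sub_one]
      by_cases hj : j < n
      · have hb : z.testBit j = true := by
          cases hzj : z.testBit j
          · exact absurd hzj (hc j hj)
          · rfl
        simp [hj, hb]
      · simp [hj, testBit_eq_false_of_ge hz (le_of_not_gt hj)]
    obtain ⟨i, hi, hib⟩ := hex
    exact sum_flip_zero n i hi (fun S => eps n S * chi n S z) fun S => by
      rw [eps_flip n S i hi, chi_flip n S z i hi, hib]; norm_num

lemma sum_eta_chi (n k z : ℕ) (hk : k < n) (hz : z < 2 ^ n) :
    ∑ S : Fin (2 ^ n), eta S.val k * chi n S.val z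
      = if z = 2 ^ k then (2 ^ n : ℝ) else 0 := by
  split_ifs with h
  · subst h
    have h1 : ∀ S : Fin (2 ^ n), eta S.val k * chi n S.val (2 ^ k) = 1 := by
      intro S
      have hchi : chi n S.val (2 ^ k) = eta S.val k := by
        unfold chi eta
        rw [Finset.prod_eq_single k]
        · rw [Nat.testBit_two_pow]
          simp
        · intro j hj hjk
          rw [Nat.testBit_two_pow]
          simp [Ne.symm hjk]
        · intro hnk; exact absurd (Finset.mem_range.2 hk) hnk
      rw [hchi]
      unfold eta
      cases S.val.testBit k <;> norm_num
    rw [Finset.sum_congr rfl fun S _ => h1 S]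
    simp
  · cases hzk : z.testBit k with
    | false =>
      exact sum_flip_zero n k hk (fun S => eta S k * chi n S z) fun S => by
        rw [eta_flip_self, chi_flip n S z k hk, hzk]; norm_num
    | true =>
      have hex : ∃ j, j ≠ k ∧ z.testBit j = true := by
        by_contra hc
        push_neg at hc
        refine h (Nat.eq_of_testBit_eq fun j => ?_)
        rw [Nat.testBit_two_pow]
        by_cases hj : j = k
        · subst hj; simp [hzk]
        · have hb : z.testBit j = false := by
            cases hzj : z.testBit j
            · rfl
            · exact absurd hzj (hc j hj)
          simp [hb, Ne.symm hj]
      obtain ⟨j, hjk, hjb⟩ := hex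
      have hj : j < n := by
        by_contra hin
        rw [testBit_eq_false_of_ge hz (le_of_not_gt hin)] at hjb
        exact Bool.false_ne_true hjb
      exact sum_flip_zero n j hj (fun S => eta S k * chi n S z) fun S => by
        rw [eta_flip_ne _ _ _ hjk, chi_flip n S z j hj, hjb]; norm_num

lemma eq_pow_sub_one_of_card {n z : ℕ} (hz : z < 2 ^ n)
    (h : ((Finset.range n).filter fun k => z.testBit k = true).card = n) :
    z = 2 ^ n - 1 := by
  have hset : (Finset.range n).filter (fun k => z.testBit k = true) = Finset.range n :=
    Finset.eq_of_subset_of_card_le (Finset.filter_subset _ _)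
      (by rw [h, Finset.card_range])
  refine Nat.eq_of_testBit_eq fun j => ?_
  rw [Nat.testBit_two_pow_sub_one]
  by_cases hj : j < n
  · have hmem : j ∈ (Finset.range n).filter (fun k => z.testBit k = true) := by
      rw [hset]; exact Finset.mem_range.2 hj
    simp [hj, (Finset.mem_filter.1 hmem).2]
  · simp [hj, testBit_eq_false_of_ge hz (le_of_not_gt hj)]

lemma card_of_eq_pow_sub_one {n z : ℕ} (h : z = 2 ^ n - 1) :
    ((Finset.range n).filter fun k => z.testBit k = true).card = n := by
  subst h
  have hset : (Finset.range n).filter (fun k => (2 ^ n - 1).testBit k = true)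
      = Finset.range n := by
    apply Finset.filter_true_of_mem
    intro k hk
    rw [Nat.testBit_two_pow_sub_one]
    simpa using Finset.mem_range.1 hk
  rw [hset, Finset.card_range]

lemma eq_two_pow_of_card_one {n z : ℕ} (hz : z < 2 ^ n)
    (h : ((Finset.range n).filter fun k => z.testBit k = true).card = 1) :
    ∃ k < n, z = 2 ^ k := by
  obtain ⟨k, hk⟩ := Finset.card_eq_one.1 h
  have hkmem : k ∈ (Finset.range n).filter (fun j => z.testBit j = true) := by
    rw [hk]; exact Finset.mem_singleton_self k
  have hkn : k < n := Finset.mem_range.1 (Finset.mem_filter.1 hkmem).1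
  refine ⟨k, hkn, Nat.eq_of_testBit_eq fun j => ?_⟩
  rw [Nat.testBit_two_pow]
  by_cases hj : j < n
  · by_cases hjk : j = k
    · subst hjk; simp [(Finset.mem_filter.1 hkmem).2]
    · have hnot : j ∉ (Finset.range n).filter (fun i => z.testBit i = true) := by
        rw [hk]; simp [hjk]
      have hzj : z.testBit j = false := by
        cases hzj : z.testBit j
        · rfl
        · exact absurd (Finset.mem_filter.2 ⟨Finset.mem_range.2 hj, hzj⟩) hnot
      simp [hzj, Ne.symm hjk]
  · have hkj : k ≠ j := fun e => hj (e ▸ hkn)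
    simp [testBit_eq_false_of_ge hz (le_of_not_gt hj), hkj]

lemma card_one_of_eq_two_pow {n z k : ℕ} (hk : k < n) (h : z = 2 ^ k) :
    ((Finset.range n).filter fun j => z.testBit j = true).card = 1 := by
  subst h
  have hset : (Finset.range n).filter (fun j => (2 ^ k).testBit j = true) = {k} := by
    ext j
    simp only [Finset.mem_filter, Finset.mem_range, Finset.mem_singleton,
      Nat.testBit_two_pow, decide_eq_true_eq]
    constructor
    · rintro ⟨-, hkj⟩; exact hkj.symm
    · rintro rfl; exact ⟨hk, rfl⟩
  rw [hset, Finset.card_singleton]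

lemma two_pow_ne {n k : ℕ} (hn : 2 ≤ n) (hk : k < n) : (2 : ℕ) ^ k ≠ 2 ^ n - 1 := by
  intro h
  have h1 := card_one_of_eq_two_pow (n := n) hk (rfl : (2:ℕ) ^ k = 2 ^ k)
  have h2 := card_of_eq_pow_sub_one (n := n) (z := (2:ℕ) ^ k) h
  omega

lemma sum_lam_chi (n : ℕ) (hn : 2 ≤ n) (x y : Fin (2 ^ n)) :
    ∑ S : Fin (2 ^ n), lam n S.val * chi n S.val (x.val ^^^ y.val)
      = (2 ^ n : ℝ) *
        (if ((Finset.range n).filter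
            (fun k => (x : ℕ).testBit k ≠ (y : ℕ).testBit k)).card = n then -1
         else if ((Finset.range n).filter
            (fun k => (x : ℕ).testBit k ≠ (y : ℕ).testBit k)).card = 1 then 1
         else 0) := by
  have hz : x.val ^^^ y.val < 2 ^ n := Nat.xor_lt_two_pow x.isLt y.isLt
  set z := x.val ^^^ y.val with hzdef
  have hfilt : (Finset.range n).filter (fun k => (x : ℕ).testBit k ≠ (y : ℕ).testBit k)
      = (Finset.range n).filter (fun k => z.testBit k = true) := by
    apply Finset.filter_congr
    intro k _
    simp only [hzdef, Nat.testBit_xor]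
    cases (x : ℕ).testBit k <;> cases (y : ℕ).testBit k <;> simp
  rw [hfilt]
  have hsplit : ∑ S : Fin (2 ^ n), lam n S.val * chi n S.val z
      = (∑ k ∈ Finset.range n, if z = 2 ^ k then (2 ^ n : ℝ) else 0)
        - (if z = 2 ^ n - 1 then (2 ^ n : ℝ) else 0) := by
    unfold lam
    simp only [sub_mul, Finset.sum_mul]
    rw [Finset.sum_sub_distrib]
    congr 1
    · rw [Finset.sum_comm]
      exact Finset.sum_congr rfl fun k hk => sum_eta_chi n k z (Finset.mem_range.1 hk) hz
    · exact sum_eps_chi n z hz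
  rw [hsplit]
  set c := ((Finset.range n).filter fun k => z.testBit k = true).card with hc
  by_cases h1 : c = n
  · have hzeq : z = 2 ^ n - 1 := eq_pow_sub_one_of_card hz h1
    rw [if_pos h1, if_pos hzeq]
    have hzero : ∀ k ∈ Finset.range n, (if z = 2 ^ k then (2 ^ n : ℝ) else 0) = 0 := by
      intro k hk
      rw [if_neg]
      rw [hzeq]
      exact fun e => two_pow_ne hn (Finset.mem_range.1 hk) e.symm
    rw [Finset.sum_eq_zero hzero]
    ring
  · rw [if_neg h1]
    by_cases h2 : c = 1
    · obtain ⟨k, hkn, hzeq⟩ := eq_two_pow_of_card_one hz h2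
      rw [if_pos h2]
      have hne : z ≠ 2 ^ n - 1 := by rw [hzeq]; exact two_pow_ne hn hkn
      rw [if_neg hne]
      rw [Finset.sum_eq_single_of_mem k (Finset.mem_range.2 hkn)]
      · rw [if_pos hzeq]; ring
      · intro b _ hbk
        rw [if_neg]
        intro e
        exact hbk (Nat.pow_right_injective (le_refl 2) (hzeq.symm.trans e)).symm
    · rw [if_neg h2]
      have hA : ∀ k ∈ Finset.range n, (if z = 2 ^ k then (2 ^ n : ℝ) else 0) = 0 := by
        intro k hk
        rw [if_neg]
        intro e
        exact h2 (by rw [hc]; exact card_one_of_eq_two_pow (Finset.mem_range.1 hk) e)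
      have hB : z ≠ 2 ^ n - 1 := fun e => h1 (by rw [hc]; exact card_of_eq_pow_sub_one e)
      rw [Finset.sum_eq_zero hA, if_neg hB]
      ring

lemma sum_chi_orth (n : ℕ) (x y : Fin (2 ^ n)) :
    ∑ S : Fin (2 ^ n), chi n S.val x.val * chi n S.val y.val
      = if x = y then (2 ^ n : ℝ) else 0 := by
  rw [Finset.sum_congr rfl fun S _ => chi_mul n S.val x.val y.val]
  rw [sum_chi_eq n _ (Nat.xor_lt_two_pow x.isLt y.isLt)]
  simp only [xor_eq_zero_iff, Fin.val_inj]

lemma lam_le (n S : ℕ) : lam n S ≤ (n : ℝ) - 1 := by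
  classical
  set s := ((Finset.range n).filter fun k => S.testBit k = true).card with hs
  have hsum : ∑ k ∈ Finset.range n, eta S k = (n : ℝ) - 2 * s := by
    have hterm : ∀ k, eta S k = 1 - 2 * (if S.testBit k = true then (1 : ℝ) else 0) := by
      intro k; unfold eta
      by_cases hb : S.testBit k = true <;> simp [hb] <;> norm_num
    rw [Finset.sum_congr rfl fun k _ => hterm k, Finset.sum_sub_distrib, ← Finset.mul_sum,
        Finset.sum_boole, Finset.sum_const, Finset.card_range, hs]
    simp
  have heps : eps n S = (-1 : ℝ) ^ s := by
    unfold eps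
    rw [Finset.prod_ite (fun _ => (-1 : ℝ)) (fun _ => (1 : ℝ)), Finset.prod_const,
        Finset.prod_const, one_pow, mul_one, hs]
  unfold lam
  rw [hsum, heps]
  rcases Nat.eq_zero_or_pos s with h0 | h0
  · rw [h0]; norm_num
  · have h1 : (1 : ℝ) ≤ s := by exact_mod_cast h0
    rcases Nat.even_or_odd s with he | ho
    · rw [he.neg_one_pow]; linarith
    · rw [ho.neg_one_pow]; linarith

end Vaux

open Vaux in
/-- The quadratic form of the combinatorial matrix `V` (entry `-1` at Hamming
distance `Δ-1`, entry `1` at Hamming distance `1`, zero otherwise) is bounded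
by `(Δ-2)‖α‖²` for every vector `α ∈ ℂ^{2^{Δ-1}}`. -/
theorem V_quadratic_form_le (Δ : ℕ) (hΔ : 3 ≤ Δ)
    (V : Matrix (Fin (2 ^ (Δ - 1))) (Fin (2 ^ (Δ - 1))) ℝ)
    (hV : ∀ x y : Fin (2 ^ (Δ - 1)),
      V x y =
        if ((Finset.range (Δ - 1)).filter
            (fun k => (x : ℕ).testBit k ≠ (y : ℕ).testBit k)).card = Δ - 1 then -1
        else if ((Finset.range (Δ - 1)).filter
            (fun k => (x : ℕ).testBit k ≠ (y : ℕ).testBit k)).card = 1 then 1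
        else 0)
    (α : Fin (2 ^ (Δ - 1)) → ℂ) :
    (∑ x, ∑ y, (starRingEnd ℂ) (α x) * (V x y : ℂ) * α y).re ≤
      ((Δ : ℝ) - 2) * ∑ x, ‖α x‖ ^ 2 := by
  classical
  have hn2 : 2 ≤ Δ - 1 := by omega
  set β : Fin (2 ^ (Δ - 1)) → ℂ :=
    fun S => ∑ x, ((chi (Δ - 1) S.val x.val : ℝ) : ℂ) * α x with hβ
  have hVs : ∀ x y : Fin (2 ^ (Δ - 1)), ((2 ^ (Δ - 1) : ℝ)) * V x y
      = ∑ S : Fin (2 ^ (Δ - 1)),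
          lam (Δ - 1) S.val * (chi (Δ - 1) S.val x.val * chi (Δ - 1) S.val y.val) := by
    intro x y
    rw [hV x y, ← sum_lam_chi (Δ - 1) hn2 x y]
    exact Finset.sum_congr rfl fun S _ => by rw [chi_mul]
  have hconj : ∀ S : Fin (2 ^ (Δ - 1)), (starRingEnd ℂ) (β S)
      = ∑ x, ((chi (Δ - 1) S.val x.val : ℝ) : ℂ) * (starRingEnd ℂ) (α x) := by
    intro S
    rw [hβ]
    rw [map_sum]
    exact Finset.sum_congr rfl fun x _ => by
      rw [map_mul, Complex.conj_ofReal]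
  have hmain : (2 ^ (Δ - 1) : ℂ) * (∑ x, ∑ y, (starRingEnd ℂ) (α x) * (V x y : ℂ) * α y)
      = ∑ S : Fin (2 ^ (Δ - 1)),
          ((lam (Δ - 1) S.val : ℝ) : ℂ) * ((Complex.normSq (β S) : ℝ) : ℂ) := by
    calc (2 ^ (Δ - 1) : ℂ) * (∑ x, ∑ y, (starRingEnd ℂ) (α x) * (V x y : ℂ) * α y)
        = ∑ x, ∑ y, (starRingEnd ℂ) (α x) * α y
            * (((2 ^ (Δ - 1) : ℝ) * V x y : ℝ) : ℂ) := by
          rw [Finset.mul_sum]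
          refine Finset.sum_congr rfl fun x _ => ?_
          rw [Finset.mul_sum]
          refine Finset.sum_congr rfl fun y _ => ?_
          push_cast
          ring
      _ = ∑ x, ∑ y, ∑ S : Fin (2 ^ (Δ - 1)), ((lam (Δ - 1) S.val : ℝ) : ℂ)
            * (((chi (Δ - 1) S.val x.val : ℝ) : ℂ) * (starRingEnd ℂ) (α x))
            * (((chi (Δ - 1) S.val y.val : ℝ) : ℂ) * α y) := by
          refine Finset.sum_congr rfl fun x _ => Finset.sum_congr rfl fun y _ => ?_
          rw [hVs x y]
          push_cast
          rw [Finset.mul_sum]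
          refine Finset.sum_congr rfl fun S _ => ?_
          ring
      _ = ∑ S : Fin (2 ^ (Δ - 1)), ∑ x, ∑ y, ((lam (Δ - 1) S.val : ℝ) : ℂ)
            * (((chi (Δ - 1) S.val x.val : ℝ) : ℂ) * (starRingEnd ℂ) (α x))
            * (((chi (Δ - 1) S.val y.val : ℝ) : ℂ) * α y) := by
          rw [Finset.sum_congr rfl fun x _ => Finset.sum_comm]
          exact Finset.sum_comm
      _ = ∑ S : Fin (2 ^ (Δ - 1)),
            ((lam (Δ - 1) S.val : ℝ) : ℂ) * ((starRingEnd ℂ) (β S) * β S) := by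
          refine Finset.sum_congr rfl fun S _ => ?_
          rw [hconj S, hβ]
          rw [Finset.sum_mul_sum]
          rw [Finset.mul_sum]
          refine Finset.sum_congr rfl fun x _ => ?_
          rw [Finset.mul_sum]
          refine Finset.sum_congr rfl fun y _ => ?_
          ring
      _ = ∑ S : Fin (2 ^ (Δ - 1)),
            ((lam (Δ - 1) S.val : ℝ) : ℂ) * ((Complex.normSq (β S) : ℝ) : ℂ) := by
          refine Finset.sum_congr rfl fun S _ => ?_
          rw [← Complex.normSq_eq_conj_mul_self]
  have hpars : ∑ S : Fin (2 ^ (Δ - 1)), ((Complex.normSq (β S) : ℝ) : ℂ)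
      = (2 ^ (Δ - 1) : ℂ) * ∑ x, ((Complex.normSq (α x) : ℝ) : ℂ) := by
    calc ∑ S : Fin (2 ^ (Δ - 1)), ((Complex.normSq (β S) : ℝ) : ℂ)
        = ∑ S : Fin (2 ^ (Δ - 1)), ∑ x, ∑ y,
            (((chi (Δ - 1) S.val x.val : ℝ) : ℂ) * (starRingEnd ℂ) (α x))
            * (((chi (Δ - 1) S.val y.val : ℝ) : ℂ) * α y) := by
          refine Finset.sum_congr rfl fun S _ => ?_
          rw [Complex.normSq_eq_conj_mul_self, hconj S, hβ]
          rw [Finset.sum_mul_sum]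
      _ = ∑ x, ∑ y, ∑ S : Fin (2 ^ (Δ - 1)),
            (((chi (Δ - 1) S.val x.val : ℝ) : ℂ) * (starRingEnd ℂ) (α x))
            * (((chi (Δ - 1) S.val y.val : ℝ) : ℂ) * α y) := by
          rw [Finset.sum_comm]
          exact Finset.sum_congr rfl fun x _ => Finset.sum_comm
      _ = ∑ x, ∑ y, ((starRingEnd ℂ) (α x) * α y)
            * (((if x = y then (2 ^ (Δ - 1) : ℝ) else 0) : ℝ) : ℂ) := by
          refine Finset.sum_congr rfl fun x _ => Finset.sum_congr rfl fun y _ => ?_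
          rw [← sum_chi_orth (Δ - 1) x y]
          push_cast
          rw [Finset.mul_sum]
          exact Finset.sum_congr rfl fun S _ => by ring
      _ = (2 ^ (Δ - 1) : ℂ) * ∑ x, ((Complex.normSq (α x) : ℝ) : ℂ) := by
          rw [Finset.mul_sum]
          refine Finset.sum_congr rfl fun x _ => ?_
          rw [Finset.sum_eq_single_of_mem x (Finset.mem_univ x)]
          · rw [if_pos rfl, Complex.normSq_eq_conj_mul_self]
            push_cast
            ring
          · intro y _ hyx
            rw [if_neg (Ne.symm hyx)]
            simp
  have hparsR : ∑ S : Fin (2 ^ (Δ - 1)), Complex.normSq (β S)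
      = 2 ^ (Δ - 1) * ∑ x, Complex.normSq (α x) := by
    exact_mod_cast hpars
  have hneC : (2 ^ (Δ - 1) : ℂ) ≠ 0 := pow_ne_zero _ two_ne_zero
  have hQ : (∑ x, ∑ y, (starRingEnd ℂ) (α x) * (V x y : ℂ) * α y)
      = ((((∑ S : Fin (2 ^ (Δ - 1)), lam (Δ - 1) S.val * Complex.normSq (β S))
          / 2 ^ (Δ - 1)) : ℝ) : ℂ) := by
    apply mul_left_cancel₀ hneC
    rw [hmain]
    push_cast
    rw [mul_comm ((2 : ℂ) ^ (Δ - 1)), div_mul_cancel₀ _ hneC]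
  rw [hQ, Complex.ofReal_re]
  have hnorm : ∑ x, ‖α x‖ ^ 2 = ∑ x, Complex.normSq (α x) :=
    Finset.sum_congr rfl fun x _ => by
      rw [Complex.normSq_eq_norm_sq]
  have hbound : ∑ S : Fin (2 ^ (Δ - 1)), lam (Δ - 1) S.val * Complex.normSq (β S)
      ≤ ((Δ : ℝ) - 2) * (2 ^ (Δ - 1) * ∑ x, Complex.normSq (α x)) := by
    rw [← hparsR, Finset.mul_sum]
    refine Finset.sum_le_sum fun S _ => ?_
    refine mul_le_mul_of_nonneg_right ?_ (Complex.normSq_nonneg _)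
    have hl := lam_le (Δ - 1) S.val
    have hcast : ((Δ - 1 : ℕ) : ℝ) = (Δ : ℝ) - 1 := by
      rw [Nat.cast_sub (by omega : 1 ≤ Δ)]
      norm_num
    calc lam (Δ - 1) S.val ≤ ((Δ - 1 : ℕ) : ℝ) - 1 := hl
      _ = (Δ : ℝ) - 2 := by rw [hcast]; ring
  have hpos : (0 : ℝ) < 2 ^ (Δ - 1) := by positivity
  rw [div_le_iff₀ hpos]
  calc ∑ S : Fin (2 ^ (Δ - 1)), lam (Δ - 1) S.val * Complex.normSq (β S)
      ≤ ((Δ : ℝ) - 2) * (2 ^ (Δ - 1) * ∑ x, Complex.normSq (α x)) := hbound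
    _ = ((Δ : ℝ) - 2) * (∑ x, ‖α x‖ ^ 2) * 2 ^ (Δ - 1) := by
        rw [hnorm]; ring
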